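/- For every prime power q, setting n = q², there exist 2-log-sparse sets S₁, ..., Sₙ of positive integers such that the sumset S₁ + ⋯ + Sₙ contains 2^{⌊q²·log₂(q)/4⌋} consecutive integers; in particular it contains an arithmetic progression of length 2^{Ω(n log n)}. -/

import Mathlib

/-- A set of positive integers is `C`-log-sparse if every dyadic interval `[x, 2x)`
contains at most `C` of its elements. -/
def LogSparse (C : ℕ) (T : Set ℕ) : Prop :=
  (∀ t ∈ T, 0 < t) ∧ ∀ x : ℕ, 0 < x → (T ∩ Set.Ico x (2 * x)).ncard ≤ C

/-- The sumset `S 0 + S 1 + ⋯ + S (n-1)`. -/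
def sumSet {n : ℕ} (S : Fin n → Set ℕ) : Set ℕ :=
  {s | ∃ x : Fin n → ℕ, (∀ i, x i ∈ S i) ∧ ∑ i, x i = s}

/-- The arithmetic progression `{a, a+d, …, a+(k-1)d}` of length `k`. -/
def AP (a d k : ℕ) : Set ℕ := {m | ∃ i < k, m = a + i * d}

section Aux
open Finset Polynomial

-- helper: subset of pair is 2-log-sparse style ncard bound
lemma ncard_le_two_of_subset_pair {S : Set ℕ} {a b : ℕ} (h : S ⊆ {a, b}) : S.ncard ≤ 2 := by
  calc S.ncard ≤ ({a, b} : Set ℕ).ncard :=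
        Set.ncard_le_ncard h ((Set.finite_singleton b).insert a)
    _ ≤ 2 := by
        calc ({a,b} : Set ℕ).ncard ≤ ({b} : Set ℕ).ncard + 1 := Set.ncard_insert_le a {b}
          _ ≤ 2 := by simp [Set.ncard_singleton]

-- helper: log-scale injective implies 2-log-sparse
lemma logSparse_aux {S : Set ℕ}
    (hinj : ∀ a ∈ S, ∀ b ∈ S, Nat.log 2 a = Nat.log 2 b → a = b)
    {x : ℕ} (hx : 0 < x) : (S ∩ Set.Ico x (2 * x)).ncard ≤ 2 := by
  classical
  set T := S ∩ Set.Ico x (2 * x) with hT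
  have hTfin : T.Finite := (Set.finite_Ico x (2*x)).subset (Set.inter_subset_right)
  have himg : T.ncard = (Nat.log 2 '' T).ncard := by
    refine (Set.ncard_image_of_injOn ?_).symm
    intro a ha b hb hab
    exact hinj a ha.1 b hb.1 hab
  have hsub : Nat.log 2 '' T ⊆ {Nat.log 2 x, Nat.log 2 x + 1} := by
    rintro k ⟨s, hs, rfl⟩
    have hxs : x ≤ s := hs.2.1
    have hs2 : s < 2 * x := hs.2.2
    have h1 : Nat.log 2 x ≤ Nat.log 2 s := Nat.log_mono_right hxs
    have h2 : Nat.log 2 s < Nat.log 2 x + 2 := by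
      apply Nat.log_lt_of_lt_pow (by omega)
      have : x < 2 ^ (Nat.log 2 x + 1) := Nat.lt_pow_succ_log_self (by norm_num) x
      calc s < 2 * x := hs2
        _ ≤ 2 * 2 ^ (Nat.log 2 x + 1) := by omega
        _ = 2 ^ (Nat.log 2 x + 2) := by ring
    simp only [Set.mem_insert_iff, Set.mem_singleton_iff]
    omega
  rw [himg]
  exact ncard_le_two_of_subset_pair hsub

-- digit expansion
lemma digit_sum (b : ℕ) : ∀ (T j : ℕ), j < b ^ T →
    ∑ t ∈ Finset.range T, (j / b ^ t % b) * b ^ t = j := by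
  intro T
  induction T with
  | zero => intro j hj; simp at hj ⊢; omega
  | succ T ih =>
    intro j hj
    rw [Finset.sum_range_succ']
    simp only [pow_zero, Nat.div_one, mul_one]
    have key : ∀ t, j / b ^ (t+1) % b * b ^ (t+1) = b * ((j / b) / b ^ t % b * b ^ t) := by
      intro t
      rw [pow_succ, mul_comm (b ^ t) b, ← Nat.div_div_eq_div_mul]
      ring
    calc (∑ t ∈ Finset.range T, j / b ^ (t+1) % b * b ^ (t+1)) + j % b
        = (∑ t ∈ Finset.range T, b * ((j/b) / b ^ t % b * b ^ t)) + j % b := by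
          rw [Finset.sum_congr rfl (fun t _ => key t)]
      _ = b * ((j/b)) + j % b := by
          rw [← Finset.mul_sum, ih (j/b) (by
            apply Nat.div_lt_of_lt_mul
            rw [← pow_succ']
            exact hj)]
      _ = j := Nat.div_add_mod j b

lemma neighbor_bound {ι α : Type*} [DecidableEq ι] [DecidableEq α]
    (A : ι → Finset α) (D : ℕ) (hD : 1 ≤ D)
    (hcard : ∀ t, (A t).card = D)
    (hint : ∀ t t', t ≠ t' → ((A t) ∩ (A t')).card ≤ 2)
    (s : Finset ι) (hs : 2 * (s.card - 1) ≤ D * (D - 1)) :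
    s.card ≤ (s.biUnion A).card := by
  classical
  set k := s.card with hk
  clear_value k
  rcases Nat.eq_zero_or_pos k with h0 | hkpos
  · simp [← hk, h0]
  set U := s.biUnion A with hU
  set d : α → ℕ := fun p => (s.filter (fun t => p ∈ A t)).card with hd
  have hfilterU : ∀ X : Finset α, (X ⊆ U) → U.filter (fun p => p ∈ X) = X := by
    intro X hX
    rw [Finset.filter_mem_eq_inter]
    exact Finset.inter_eq_right.mpr hX
  -- (1) sum of degrees
  have h1 : ∑ p ∈ U, d p = k * D := by
    have e1 : ∑ p ∈ U, d p = ∑ p ∈ U, ∑ t ∈ s, (if p ∈ A t then 1 else 0) := by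
      refine Finset.sum_congr rfl fun p _ => ?_
      rw [hd]; exact Finset.card_filter _ _
    rw [e1, Finset.sum_comm]
    have e2 : ∀ t ∈ s, ∑ p ∈ U, (if p ∈ A t then 1 else 0) = D := by
      intro t ht
      rw [← Finset.card_filter, hfilterU _ (Finset.subset_biUnion_of_mem A ht), hcard]
    rw [Finset.sum_congr rfl e2, Finset.sum_const, smul_eq_mul, ← hk]
  -- (2) sum of squared degrees
  have h2 : ∑ p ∈ U, (d p) ^ 2 ≤ k * D + 2 * (k * k - k) := by
    have e1 : ∀ p, (d p) ^ 2 = ∑ x ∈ s ×ˢ s, (if p ∈ A x.1 ∩ A x.2 then 1 else 0) := by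
      intro p
      rw [sq, hd]
      simp only [Finset.card_filter]
      rw [Finset.sum_mul_sum]
      rw [Finset.sum_product]
      refine Finset.sum_congr rfl fun t _ => ?_
      refine Finset.sum_congr rfl fun t' _ => ?_
      by_cases h : p ∈ A t <;> by_cases h' : p ∈ A t' <;> simp [h, h']
    calc ∑ p ∈ U, (d p) ^ 2
        = ∑ x ∈ s ×ˢ s, ∑ p ∈ U, (if p ∈ A x.1 ∩ A x.2 then 1 else 0) := by
          rw [← Finset.sum_comm]
          exact Finset.sum_congr rfl fun p _ => e1 p
      _ = ∑ x ∈ s ×ˢ s, (U.filter (fun p => p ∈ A x.1 ∩ A x.2)).card := by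
          exact Finset.sum_congr rfl fun x _ => (Finset.card_filter _ _).symm
      _ = ∑ x ∈ s ×ˢ s, (A x.1 ∩ A x.2).card := by
          refine Finset.sum_congr rfl fun x hx => ?_
          have hx1 : x.1 ∈ s := (Finset.mem_product.mp hx).1
          rw [hfilterU _ ((Finset.inter_subset_left).trans (Finset.subset_biUnion_of_mem A hx1))]
      _ = ∑ x ∈ s.diag, (A x.1 ∩ A x.2).card + ∑ x ∈ s.offDiag, (A x.1 ∩ A x.2).card := by
          rw [← Finset.sum_union (Finset.disjoint_diag_offDiag s), Finset.diag_union_offDiag]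
      _ ≤ k * D + 2 * (k * k - k) := by
          gcongr ?_ + ?_
          · have : ∀ x ∈ s.diag, (A x.1 ∩ A x.2).card = D := by
              intro x hx
              have := (Finset.mem_diag.mp hx).2
              rw [this, Finset.inter_self, hcard]
            rw [Finset.sum_congr rfl this, Finset.sum_const, smul_eq_mul, Finset.diag_card, ← hk]
          · calc ∑ x ∈ s.offDiag, (A x.1 ∩ A x.2).card ≤ ∑ _x ∈ s.offDiag, 2 := by
                  refine Finset.sum_le_sum fun x hx => ?_
                  exact hint _ _ (Finset.mem_offDiag.mp hx).2.2
              _ = 2 * (k * k - k) := by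
                  rw [Finset.sum_const, smul_eq_mul, Finset.offDiag_card, ← hk, mul_comm]
  -- (3) Cauchy-Schwarz
  have h3 : (∑ p ∈ U, d p * 1) ^ 2 ≤ (∑ p ∈ U, (d p) ^ 2) * (∑ p ∈ U, 1 ^ 2) :=
    Finset.sum_mul_sq_le_sq_mul_sq (R := ℕ) U d 1
  simp only [mul_one, one_pow, Finset.sum_const, smul_eq_mul] at h3
  rw [h1] at h3
  -- combine
  have hUcard : (k * D) ^ 2 ≤ (k * D + 2 * (k * k - k)) * U.card := by
    calc (k * D) ^ 2 ≤ (∑ p ∈ U, (d p) ^ 2) * U.card := h3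
      _ ≤ (k * D + 2 * (k * k - k)) * U.card := Nat.mul_le_mul_right _ h2
  have hfac : k * (k * D + 2 * (k * k - k)) ≤ (k * D) ^ 2 := by
    obtain ⟨k', rfl⟩ : ∃ k', k = k' + 1 := ⟨k - 1, by omega⟩
    obtain ⟨D', rfl⟩ : ∃ D', D = D' + 1 := ⟨D - 1, by omega⟩
    have hs' : 2 * k' ≤ (D' + 1) * D' := by
      simpa using hs
    have hsub : (k' + 1) * (k' + 1) - (k' + 1) = (k' + 1) * k' := by
      have : (k' + 1) * (k' + 1) = (k' + 1) * k' + (k' + 1) := by ring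
      omega
    rw [hsub]
    have key : (D' + 1) + 2 * k' ≤ (D' + 1) ^ 2 := by
      have : (D' + 1) ^ 2 = (D' + 1) * D' + (D' + 1) := by ring
      omega
    calc (k' + 1) * ((k' + 1) * (D' + 1) + 2 * ((k' + 1) * k'))
        = (k' + 1) ^ 2 * ((D' + 1) + 2 * k') := by ring
      _ ≤ (k' + 1) ^ 2 * (D' + 1) ^ 2 := Nat.mul_le_mul_left _ key
      _ = ((k' + 1) * (D' + 1)) ^ 2 := by ring
  have hposfac : 0 < k * D + 2 * (k * k - k) := by
    have := Nat.mul_pos hkpos (show 0 < D by omega); omega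
  have := hfac.trans hUcard
  exact Nat.le_of_mul_le_mul_right (by rwa [mul_comm (k * D + 2 * (k*k - k)) U.card] at this) hposfac

lemma quad_roots_card {F : Type*} [Field F] [Fintype F] [DecidableEq F] (a b c : F) (h : ¬(a = 0 ∧ b = 0 ∧ c = 0)) :
    (Finset.univ.filter (fun u : F => a * u ^ 2 + b * u + c = 0)).card ≤ 2 := by
  classical
  set p : F[X] := C a * X ^ 2 + C b * X + C c with hp
  have hpne : p ≠ 0 := by
    intro h0
    apply h
    have h2 : p.coeff 2 = a := by simp [hp, coeff_C, coeff_X]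
    have h1 : p.coeff 1 = b := by simp [hp, coeff_C, coeff_X]
    have hc : p.coeff 0 = c := by simp [hp, coeff_C]
    rw [h0] at h2 h1 hc
    simp at h2 h1 hc
    exact ⟨h2.symm, h1.symm, hc.symm⟩
  have hsub : (Finset.univ.filter (fun u : F => a * u ^ 2 + b * u + c = 0)) ⊆ p.roots.toFinset := by
    intro u hu
    rw [Finset.mem_filter] at hu
    rw [Multiset.mem_toFinset, mem_roots hpne]
    simp [hp, IsRoot, hu.2]
  calc _ ≤ p.roots.toFinset.card := Finset.card_le_card hsub
    _ ≤ Multiset.card p.roots := Multiset.toFinset_card_le _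
    _ ≤ p.natDegree := card_roots' p
    _ ≤ 2 := natDegree_quadratic_le

/-- the class finsets -/
def curveSet {F : Type*} [Field F] [Fintype F] [DecidableEq F] (α β γ : F) : Finset (F × F) :=
  Finset.univ.filter (fun v : F × F => v.1 ≠ 0 ∧ v.2 = α * v.1 ^ 2 + β * v.1 + γ)

lemma curveSet_card {F : Type*} [Field F] [Fintype F] [DecidableEq F] (α β γ : F) : (curveSet α β γ).card = Fintype.card F - 1 := by
  classical
  have himg : curveSet α β γ =
      (Finset.univ.filter (fun u : F => u ≠ 0)).image
        (fun u => (u, α * u ^ 2 + β * u + γ)) := by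
    ext v
    simp only [curveSet, Finset.mem_filter, Finset.mem_image, Finset.mem_univ, true_and]
    constructor
    · rintro ⟨h1, h2⟩
      exact ⟨v.1, h1, by rw [← h2]⟩
    · rintro ⟨u, hu, rfl⟩
      exact ⟨hu, rfl⟩
  rw [himg, Finset.card_image_of_injective _ (fun u u' h => (Prod.mk.injEq _ _ _ _).mp h |>.1),
    Finset.filter_ne', Finset.card_erase_of_mem (Finset.mem_univ 0), Finset.card_univ]

lemma curveSet_inter {F : Type*} [Field F] [Fintype F] [DecidableEq F] (α β γ α' β' γ' : F) (h : ¬(α = α' ∧ β = β' ∧ γ = γ')) :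
    ((curveSet α β γ) ∩ (curveSet α' β' γ')).card ≤ 2 := by
  classical
  have hinj : Set.InjOn (fun v : F × F => v.1) ((curveSet α β γ) ∩ (curveSet α' β' γ') : Finset (F × F)) := by
    rintro ⟨u, y⟩ hv ⟨u', y'⟩ hv' (huv : u = u')
    rw [Finset.coe_inter, Set.mem_inter_iff] at hv hv'
    have h1 := (Finset.mem_coe.mp hv.1)
    have h2 := (Finset.mem_coe.mp hv'.1)
    simp only [curveSet, Finset.mem_filter] at h1 h2
    subst huv
    rw [Prod.mk.injEq]
    exact ⟨rfl, by rw [h1.2.2, h2.2.2]⟩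
  have hmap : ((curveSet α β γ) ∩ (curveSet α' β' γ')).image (fun v => v.1) ⊆
      Finset.univ.filter (fun u : F => (α - α') * u ^ 2 + (β - β') * u + (γ - γ') = 0) := by
    intro u hu
    rw [Finset.mem_image] at hu
    obtain ⟨v, hv, rfl⟩ := hu
    rw [Finset.mem_inter] at hv
    simp only [curveSet, Finset.mem_filter] at hv
    rw [Finset.mem_filter]
    refine ⟨Finset.mem_univ _, ?_⟩
    have e1 := hv.1.2.2
    have e2 := hv.2.2.2
    have : α * v.1 ^ 2 + β * v.1 + γ = α' * v.1 ^ 2 + β' * v.1 + γ' := by rw [← e1, ← e2]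
    ring_nf
    ring_nf at this
    linear_combination this
  calc ((curveSet α β γ) ∩ (curveSet α' β' γ')).card
      = (((curveSet α β γ) ∩ (curveSet α' β' γ')).image (fun v => v.1)).card := by
        rw [Finset.card_image_of_injOn hinj]
    _ ≤ _ := Finset.card_le_card hmap
    _ ≤ 2 := by
        apply quad_roots_card
        intro ⟨h1, h2, h3⟩
        apply h
        constructor
        · have := sub_eq_zero.mp h1; exact this
        constructor
        · exact sub_eq_zero.mp h2
        · exact sub_eq_zero.mp h3

lemma case_A (q : ℕ) (hq2 : 2 ≤ q) (hsmall : q ≤ 16) :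
    ∃ S : Fin (q ^ 2) → Set ℕ, (∀ i, LogSparse 2 (S i)) ∧
      ∃ a : ℕ, ∀ j : ℕ,
        j < 2 ^ (⌊(q : ℝ) ^ 2 * Real.logb 2 (q : ℝ) / 4⌋₊) →
          a + j ∈ sumSet S := by
  classical
  set n := q ^ 2 with hn
  set M := ⌊(q : ℝ) ^ 2 * Real.logb 2 (q : ℝ) / 4⌋₊ with hM
  have hMn : M ≤ n := by
    have hq0 : (0:ℝ) < q := by positivity
    have hlogb : Real.logb 2 q ≤ 4 := by
      have h16 : (q:ℝ) ≤ 16 := by exact_mod_cast hsmall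
      calc Real.logb 2 q ≤ Real.logb 2 16 :=
            Real.logb_le_logb_of_le (by norm_num) hq0 h16
        _ = 4 := by
            rw [show (16:ℝ) = 2 ^ (4:ℕ) by norm_num, Real.logb_pow,
              Real.logb_self_eq_one (by norm_num)]
            norm_num
    have : (q:ℝ) ^ 2 * Real.logb 2 q / 4 ≤ ((n : ℕ) : ℝ) := by
      push_cast [hn]
      nlinarith [sq_nonneg (q:ℝ)]
    calc M ≤ ⌊((n:ℕ):ℝ)⌋₊ := Nat.floor_le_floor this
      _ = n := Nat.floor_natCast n
  refine ⟨fun i => {v | ∃ b < 2, v = 2 ^ (n + i.val) + b * 2 ^ i.val}, ?_, ?_⟩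
  · intro i
    constructor
    · rintro v ⟨b, _, rfl⟩
      positivity
    · intro x hx
      have hsub : {v | ∃ b < 2, v = 2 ^ (n + i.val) + b * 2 ^ i.val} ∩ Set.Ico x (2*x) ⊆
          {2 ^ (n + i.val), 2 ^ (n + i.val) + 2 ^ i.val} := by
        rintro v ⟨⟨b, hb, rfl⟩, _⟩
        interval_cases b
        · left; simp
        · right; simp
      exact ncard_le_two_of_subset_pair hsub
  · refine ⟨∑ i : Fin n, 2 ^ (n + i.val), ?_⟩
    intro j hj
    have hjn : j < 2 ^ n := lt_of_lt_of_le hj (Nat.pow_le_pow_right (by norm_num) hMn)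
    refine ⟨fun i => 2 ^ (n + i.val) + (j / 2 ^ i.val % 2) * 2 ^ i.val, ?_, ?_⟩
    · intro i
      exact ⟨j / 2 ^ i.val % 2, Nat.mod_lt _ (by norm_num), rfl⟩
    · rw [Finset.sum_add_distrib]
      congr 1
      rw [Fin.sum_univ_eq_sum_range (fun t => j / 2 ^ t % 2 * 2 ^ t)]
      exact digit_sum 2 n j hjn

lemma case_B (p kk q : ℕ) (hp : p.Prime) (hkk : 1 ≤ kk) (hqpk : q = p ^ kk)
    (hq17 : 17 ≤ q) :
    ∃ S : Fin (q ^ 2) → Set ℕ, (∀ i, LogSparse 2 (S i)) ∧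
      ∃ a : ℕ, ∀ j : ℕ,
        j < 2 ^ (⌊(q : ℝ) ^ 2 * Real.logb 2 (q : ℝ) / 4⌋₊) →
          a + j ∈ sumSet S := by
  classical
  haveI : Fact p.Prime := ⟨hp⟩
  set M := ⌊(q : ℝ) ^ 2 * Real.logb 2 (q : ℝ) / 4⌋₊ with hM
  set m := Nat.log 2 q with hm
  have hq0 : q ≠ 0 := by omega
  have hm4 : 4 ≤ m := by
    rw [hm, Nat.le_log_iff_pow_le (by norm_num) hq0]
    norm_num
    omega
  have hmpos : 0 < m := by omega
  -- floor bound
  have h4M : 4 * M ≤ q ^ 2 * (m + 1) := by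
    have hq0' : (0:ℝ) < q := by positivity
    have hlt : Real.logb 2 q ≤ ((m+1 : ℕ) : ℝ) := by
      have hqle : (q:ℝ) ≤ ((2 ^ (m+1) : ℕ) : ℝ) := by
        exact_mod_cast (Nat.lt_pow_succ_log_self (by norm_num) q).le
      calc Real.logb 2 q ≤ Real.logb 2 ((2:ℝ) ^ (m+1)) := by
            apply Real.logb_le_logb_of_le (by norm_num) hq0'
            push_cast at hqle ⊢
            exact hqle
        _ = ((m+1:ℕ) : ℝ) := by
            rw [Real.logb_pow, Real.logb_self_eq_one (by norm_num)]
            norm_num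
    have hfloor : (M:ℝ) ≤ (q:ℝ)^2 * Real.logb 2 q / 4 := by
      rw [hM]
      apply Nat.floor_le
      have : (0:ℝ) ≤ Real.logb 2 q := Real.logb_nonneg (by norm_num)
        (by exact_mod_cast Nat.one_le_iff_ne_zero.mpr hq0)
      positivity
    push_cast at hlt
    have h5 : (q:ℝ)^2 * Real.logb 2 q / 4 ≤ (q:ℝ)^2 * ((m:ℝ)+1) / 4 := by
      have h0 : (0:ℝ) ≤ (q:ℝ)^2 := by positivity
      have := mul_le_mul_of_nonneg_left hlt h0
      linarith
    have hcast : ((4 * M : ℕ) : ℝ) ≤ ((q ^ 2 * (m + 1) : ℕ) : ℝ) := by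
      push_cast
      linarith [hfloor.trans h5]
    exact_mod_cast hcast
  set T := M / m + 1 with hT
  have hMTm : M ≤ T * m := by
    have h1 : m * (M / m) + M % m = M := Nat.div_add_mod M m
    have h2 : M % m < m := Nat.mod_lt M hmpos
    calc M = m * (M / m) + M % m := h1.symm
      _ ≤ m * (M / m) + m := by omega
      _ = (M / m + 1) * m := by ring
  have hdm : M / m * m ≤ M := Nat.div_mul_le_self M m
  have h16 : 16 * (M / m) ≤ 5 * q ^ 2 := by
    have step : m * (16 * (M / m)) ≤ m * (5 * q ^ 2) := by
      calc m * (16 * (M/m)) = 16 * (M/m * m) := by ring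
        _ ≤ 16 * M := by omega
        _ = 4 * (4 * M) := by ring
        _ ≤ 4 * (q^2 * (m+1)) := by omega
        _ = q^2 * (4*m + 4) := by ring
        _ ≤ q^2 * (5*m) := Nat.mul_le_mul_left _ (by omega)
        _ = m * (5 * q^2) := by ring
    exact Nat.le_of_mul_le_mul_left step hmpos
  have hq289 : 289 ≤ q ^ 2 := by
    have h := Nat.mul_le_mul hq17 hq17
    have : q ^ 2 = q * q := sq q
    omega
  have hineq : 5 * q ^ 2 ≤ 8 * ((q-1) * (q-2)) := by
    obtain ⟨r, rfl⟩ : ∃ r, q = r + 17 := ⟨q - 17, by omega⟩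
    have h1 : r + 17 - 1 = r + 16 := by omega
    have h2 : r + 17 - 2 = r + 15 := by omega
    rw [h1, h2]
    have e1 : 8*((r+16)*(r+15)) = 8*(r*r) + 248*r + 1920 := by ring
    have e2 : 5*(r+17)^2 = 5*(r*r) + 170*r + 1445 := by ring
    omega
  have hcap2 : 2 * (T - 1) ≤ (q-1) * (q-2) := by
    have hT1 : T - 1 = M / m := by omega
    rw [hT1]
    omega
  have hTq2 : T ≤ q ^ 2 := by omega
  have h2mq : 2 ^ m ≤ q := Nat.pow_log_le_self 2 hq0
  -- field setup
  set F := GaloisField p kk with hF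
  haveI : Fintype F := Fintype.ofFinite F
  haveI : DecidableEq F := Classical.decEq F
  have hcardF : Fintype.card F = q := by
    have h := GaloisField.card (p := p) (n := kk) (by omega)
    rw [Nat.card_eq_fintype_card] at h
    rw [h, hqpk]
  have hcardFF : Fintype.card (F × F) = q ^ 2 := by
    rw [Fintype.card_prod, hcardF, sq]
  set e : (F × F) ≃ Fin (q ^ 2) := Fintype.equivFinOfCardEq hcardFF with he
  set eF : Fin q ≃ F := (Fintype.equivFinOfCardEq hcardF).symm with heF
  set ι : Fin (2^m) → F := fun c => eF (Fin.castLE h2mq c) with hι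
  have hιinj : Function.Injective ι := fun c c' h =>
    Fin.castLE_injective h2mq (eF.injective h)
  set π : Fin T → F × F := fun t => e.symm (Fin.castLE hTq2 t) with hπ
  have hπinj : Function.Injective π := fun t t' h =>
    Fin.castLE_injective hTq2 (e.symm.injective h)
  set W := T * m with hW
  set xe : Fin T → Fin (2^m) → ℕ := fun t c => 4 ^ (W + t.val + 1) + c.val * 2 ^ (m * t.val)
    with hxe
  -- log computations
  have hlog4 : ∀ k : ℕ, Nat.log 2 (4 ^ k) = 2 * k := by
    intro k
    rw [show (4:ℕ) = 2^2 by norm_num, ← pow_mul, Nat.log_pow (by norm_num)]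
  have hlow : ∀ (t : Fin T) (c : Fin (2^m)), c.val * 2 ^ (m * t.val) < 4 ^ (W + t.val + 1) := by
    intro t c
    calc c.val * 2 ^ (m * t.val) < 2^m * 2 ^ (m * t.val) :=
          (Nat.mul_lt_mul_right (Nat.two_pow_pos _)).mpr c.isLt
      _ = 2 ^ (m * (t.val + 1)) := by rw [← pow_add]; ring_nf
      _ ≤ 2 ^ (m * T) := Nat.pow_le_pow_right (by norm_num) (Nat.mul_le_mul_left m t.isLt)
      _ ≤ 2 ^ (2 * (W + t.val + 1)) := by
          apply Nat.pow_le_pow_right (by norm_num)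
          have hmt : m * T = W := by rw [hW]; ring
          omega
      _ = 4 ^ (W + t.val + 1) := by rw [show (4:ℕ) = 2^2 by norm_num, ← pow_mul]
  have hlogxe : ∀ (t : Fin T) (c : Fin (2^m)), Nat.log 2 (xe t c) = 2 * (W + t.val + 1) := by
    intro t c
    apply Nat.log_eq_of_pow_le_of_lt_pow
    · calc (2:ℕ) ^ (2 * (W + t.val + 1)) = 4 ^ (W + t.val + 1) := by
            rw [show (4:ℕ) = 2^2 by norm_num, ← pow_mul]
        _ ≤ xe t c := Nat.le_add_right _ _
    · calc xe t c < 4 ^ (W + t.val + 1) + 4 ^ (W + t.val + 1) := by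
            have := hlow t c
            simp only [hxe]
            omega
        _ = 2 ^ (2 * (W + t.val + 1) + 1) := by
            rw [show (4:ℕ) = 2^2 by norm_num, ← pow_mul, pow_succ]
            ring
  -- the sets
  set S : Fin (q^2) → Set ℕ := fun i =>
    insert (4^W) {v | ∃ t c, (e.symm i) ∈ curveSet (ι c) (π t).1 (π t).2 ∧ v = xe t c}
    with hS
  refine ⟨S, ?_, (q^2 - T) * 4^W + ∑ t : Fin T, 4^(W + t.val + 1), ?_⟩
  · -- LogSparse
    intro i
    constructor
    · rintro v hv
      rw [hS, Set.mem_insert_iff] at hv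
      rcases hv with rfl | ⟨t, c, _, rfl⟩
      · positivity
      · simp only [hxe]
        positivity
    · intro x hx
      refine logSparse_aux ?_ hx
      intro v hv w hw hlog
      rw [hS, Set.mem_insert_iff] at hv hw
      rcases hv with rfl | ⟨t, c, hcur, rfl⟩
      · rcases hw with rfl | ⟨t', c', hcur', rfl⟩
        · rfl
        · exfalso
          rw [hlog4, hlogxe] at hlog
          omega
      · rcases hw with rfl | ⟨t', c', hcur', rfl⟩
        · exfalso
          rw [hlog4, hlogxe] at hlog
          omega
        · rw [hlogxe, hlogxe] at hlog
          have htt : t = t' := by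
            apply Fin.ext
            omega
          subst htt
          simp only [curveSet, Finset.mem_filter] at hcur hcur'
          have hu : (e.symm i).1 ≠ 0 := hcur.2.1
          have heq : ι c * (e.symm i).1 ^ 2 = ι c' * (e.symm i).1 ^ 2 := by
            have h1 := hcur.2.2
            have h2 := hcur'.2.2
            have := h1.symm.trans h2
            linear_combination this
          have hcc : c = c' := by
            apply hιinj
            exact mul_right_cancel₀ (pow_ne_zero 2 hu) heq
          rw [hcc]
  · -- sum containment
    intro j hj
    have hjT : j < (2^m)^T := by
      rw [← pow_mul]
      exact lt_of_lt_of_le hj (Nat.pow_le_pow_right (by norm_num) (by rw [mul_comm]; exact hMTm))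
    have h2mpos : 0 < 2^m := Nat.two_pow_pos m
    set cd : Fin T → Fin (2^m) := fun t => ⟨j / (2^m)^t.val % 2^m, Nat.mod_lt _ h2mpos⟩ with hcd
    set A : Fin T → Finset (F × F) := fun t => curveSet (ι (cd t)) (π t).1 (π t).2 with hA
    have hall : ∀ s : Finset (Fin T), s.card ≤ (s.biUnion A).card := by
      intro s
      apply neighbor_bound A (q - 1) (by omega)
      · intro t
        simp only [hA]
        rw [curveSet_card, hcardF]
      · intro t t' htt'
        simp only [hA]
        apply curveSet_inter
        rintro ⟨h1, h2, h3⟩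
        exact htt' (hπinj (Prod.ext_iff.mpr ⟨h2, h3⟩))
      · have hsT : s.card ≤ T := by
          calc s.card ≤ (Finset.univ : Finset (Fin T)).card := Finset.card_le_univ s
            _ = T := by rw [Finset.card_univ, Fintype.card_fin]
        have hq12 : (q - 1) - 1 = q - 2 := by omega
        rw [hq12]
        omega
    obtain ⟨f, hfinj, hfmem⟩ := (Finset.all_card_le_biUnion_card_iff_exists_injective A).mp hall
    set g : Fin T → Fin (q^2) := fun t => e (f t) with hg
    have hginj : Function.Injective g := fun t t' h => hfinj (e.injective h)
    set x : Fin (q^2) → ℕ :=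
      fun i => if h : ∃ t, g t = i then xe h.choose (cd h.choose) else 4^W with hx
    refine ⟨x, ?_, ?_⟩
    · intro i
      by_cases h : ∃ t, g t = i
      · have hxi : x i = xe h.choose (cd h.choose) := by
          simp only [hx]
          rw [dif_pos h]
        rw [hxi, hS]
        right
        refine ⟨h.choose, cd h.choose, ?_, rfl⟩
        have hgi : g h.choose = i := h.choose_spec
        simp only [hg] at hgi
        have : e.symm i = f h.choose := by
          rw [Equiv.symm_apply_eq]
          exact hgi.symm
        rw [this]
        exact hfmem h.choose
      · have hxi : x i = 4^W := by
          simp only [hx]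
          rw [dif_neg h]
        rw [hxi, hS]
        left
        rfl
    · -- the sum
      have hxg : ∀ t, x (g t) = xe t (cd t) := by
        intro t
        have hex : ∃ t', g t' = g t := ⟨t, rfl⟩
        have hch : hex.choose = t := hginj hex.choose_spec
        simp only [hx]
        rw [dif_pos hex, hch]
      have hxout : ∀ i ∈ Finset.univ \ Finset.univ.image g, x i = 4^W := by
        intro i hi
        simp only [hx]
        rw [dif_neg]
        rintro ⟨t, rfl⟩
        exact (Finset.mem_sdiff.mp hi).2 (Finset.mem_image_of_mem g (Finset.mem_univ t))
      have himg_card : (Finset.univ.image g).card = T := by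
        rw [Finset.card_image_of_injective _ hginj, Finset.card_univ, Fintype.card_fin]
      have hsplit : ∑ i, x i
          = (q^2 - T) * 4^W + ∑ t : Fin T, xe t (cd t) := by
        rw [← Finset.sum_sdiff (Finset.subset_univ (Finset.univ.image g))]
        congr 1
        · rw [Finset.sum_congr rfl hxout, Finset.sum_const, smul_eq_mul,
            Finset.card_sdiff_of_subset (Finset.subset_univ _), Finset.card_univ, Fintype.card_fin,
            himg_card]
        · rw [Finset.sum_image (fun a _ b _ h => hginj h)]
          exact Finset.sum_congr rfl fun t _ => hxg t
      have hdig : ∑ t : Fin T, (cd t).val * 2^(m * t.val) = j := by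
        have hterm : ∀ t : Fin T, (cd t).val * 2^(m * t.val)
            = (j / (2^m)^t.val % 2^m) * (2^m)^t.val := by
          intro t
          simp only [hcd]
          rw [← pow_mul]
        rw [Finset.sum_congr rfl (fun t _ => hterm t),
          Fin.sum_univ_eq_sum_range (fun t => (j / (2^m)^t % 2^m) * (2^m)^t)]
        exact digit_sum (2^m) T j hjT
      have hxesum : ∑ t : Fin T, xe t (cd t)
          = (∑ t : Fin T, 4^(W + t.val + 1)) + j := by
        simp only [hxe]
        rw [Finset.sum_add_distrib, hdig]
      rw [hsplit, hxesum]
      ring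

end Aux

set_option maxHeartbeats 1000000 in
theorem explicit_construction (q : ℕ) (hq : ∃ p k : ℕ, p.Prime ∧ 1 ≤ k ∧ q = p ^ k) :
    ∃ S : Fin (q ^ 2) → Set ℕ, (∀ i, LogSparse 2 (S i)) ∧
      ∃ a : ℕ, ∀ j : ℕ,
        j < 2 ^ (⌊(q : ℝ) ^ 2 * Real.logb 2 (q : ℝ) / 4⌋₊) →
          a + j ∈ sumSet S := by
  obtain ⟨p, k, hp, hk, hqpk⟩ := hq
  have hq2 : 2 ≤ q := by
    have h1 : p ≤ p ^ k := Nat.le_self_pow (by omega) p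
    have := hp.two_le
    omega
  by_cases hsmall : q ≤ 16
  · exact case_A q hq2 hsmall
  · exact case_B p k q hp hk hqpk (by omega)
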